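/- arXiv:2205.13423 — 7 statements merged into one kernel-verified Lean document; each statement's English description precedes it below -/
import Mathlib

section
/- Let σ, t, T, T_post be real numbers with σ > 0, 0 < t, t ≤ T/4, and T < T_post. Then the difference M₁(σ,t,T,T_post) − M₂(σ,T,T_post) is a positive semidefinite 2×2 real matrix. (This is the matrix inequality underlying the paper's main theorem for the Almgren–Chriss model: sampling the three price points P_t, P_T, P_{T_post} with t ≤ T/4 yields Fisher information dominating that of the realized-impact/permanent-impact statistics (I, J), for every impact function and every metaorder distribution.) -/
open Matrix

/-- Fisher information matrix of the three-point experiment `(P_t, P_T, P_{T_post})`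
in the Almgren–Chriss model. -/
noncomputable def fisherThreePoint (σ t T Tpost : ℝ) : Matrix (Fin 2) (Fin 2) ℝ :=
  (σ ^ 2)⁻¹ • !![1 / T, 1 / T; 1 / T, 1 / t + 1 / (Tpost - T)]

/-- Fisher information matrix of the `(I, J)` (realized/permanent impact) experiment
in the Almgren–Chriss model. -/
noncomputable def fisherIJ (σ T Tpost : ℝ) : Matrix (Fin 2) (Fin 2) ℝ :=
  (σ ^ 2)⁻¹ • (1 / T) •
    !![(Tpost / 4 - T / 6) / (Tpost / 3 - T / 4), (Tpost / 2 - T / 2) / (Tpost / 3 - T / 4);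
       (Tpost / 2 - T / 2) / (Tpost / 3 - T / 4), Tpost / (Tpost / 3 - T / 4)]

set_option maxHeartbeats 1000000 in
/-- If the extra sample time `t` satisfies `t ≤ T/4`, the three-point Fisher information
dominates the `(I, J)` Fisher information: their difference is positive semidefinite. -/
theorem threePoint_dominates_IJ (σ t T Tpost : ℝ) (hσ : 0 < σ) (ht : 0 < t)
    (htT : t ≤ T / 4) (hTpost : T < Tpost) :
    (fisherThreePoint σ t T Tpost - fisherIJ σ T Tpost).PosSemidef := by
  have hT : 0 < T := by linarith
  rw [Matrix.posSemidef_iff_dotProduct_mulVec]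
  constructor
  · ext i j
    fin_cases i <;> fin_cases j <;>
      simp [fisherThreePoint, fisherIJ, Matrix.conjTranspose_apply]
  · intro x
    have hσ2 : (0:ℝ) < σ ^ 2 := by positivity
    simp only [fisherThreePoint, fisherIJ, Matrix.sub_apply, Matrix.smul_apply,
      Matrix.mulVec, dotProduct, Fin.sum_univ_two, Pi.star_apply, star_trivial,
      Matrix.of_apply, Matrix.cons_val', Matrix.cons_val_zero, Matrix.cons_val_one,
      Matrix.head_cons, Matrix.empty_val', Matrix.cons_val_fin_one, Matrix.head_fin_const,
      smul_eq_mul]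
    set u := x 0 with hu
    set v := x 1 with hv
    obtain ⟨s, hsdef⟩ : ∃ s, Tpost - T = s := ⟨_, rfl⟩
    obtain ⟨D, hDdef⟩ : ∃ D, Tpost / 3 - T / 4 = D := ⟨_, rfl⟩
    rw [hsdef, hDdef]
    have hs : 0 < s := by rw [← hsdef]; linarith
    have hD : 0 < D := by rw [← hDdef]; linarith
    have hT0 : T ≠ 0 := ne_of_gt hT
    have ht0 : t ≠ 0 := ne_of_gt ht
    have hs0 : s ≠ 0 := ne_of_gt hs
    have hD0 : D ≠ 0 := ne_of_gt hD
    have hσ0 : σ ≠ 0 := ne_of_gt hσ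
    have key :
        u * (((σ ^ 2)⁻¹ * (1 / T) - (σ ^ 2)⁻¹ * (1 / T * ((Tpost / 4 - T / 6) / D))) * u
            + ((σ ^ 2)⁻¹ * (1 / T) - (σ ^ 2)⁻¹ * (1 / T * ((Tpost / 2 - T / 2) / D))) * v)
          + v * (((σ ^ 2)⁻¹ * (1 / T) - (σ ^ 2)⁻¹ * (1 / T * ((Tpost / 2 - T / 2) / D))) * u
            + ((σ ^ 2)⁻¹ * (1 / t + 1 / s) - (σ ^ 2)⁻¹ * (1 / T * (Tpost / D))) * v)
        = (t * (s * u + (T - 2 * s) * v) ^ 2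
            + s * (T - 4 * t) * (T + 4 * s) * v ^ 2)
          / (σ ^ 2 * (12 * T * D * t * s)) := by
      field_simp
      rw [← hsdef, ← hDdef]
      ring
    rw [key]
    have h1 : 0 ≤ T - 4 * t := by linarith
    positivity
end

section
/- Let σ, t, T, T_post be real numbers with σ > 0, T/4 < t < T < T_post. Then the difference M₁(σ,t,T,T_post) − M₂(σ,T,T_post) is NOT positive semidefinite. (Tightness of the ratio 1/4 in the paper's main theorem: for samples taken later than a quarter of the trade duration, the three-point Fisher information no longer dominates that of (I, J) for all impact functions.) -/
set_option maxHeartbeats 1000000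


open Matrix

/-- Tightness of the ratio `1/4`: if `T/4 < t < T < T_post`, the difference of the
three-point Fisher information and the `(I, J)` Fisher information is NOT
positive semidefinite. -/
theorem threePoint_not_dominates_IJ_of_late (σ t T Tpost : ℝ) (hσ : 0 < σ)
    (htlow : T / 4 < t) (htT : t < T) (hTpost : T < Tpost) :
    ¬ (fisherThreePoint σ t T Tpost - fisherIJ σ T Tpost).PosSemidef := by
  intro h
  have hT : 0 < T := lt_trans (by linarith) htT
  have ht : 0 < t := lt_trans (by linarith) htlow
  have hd : 0 < Tpost / 3 - T / 4 := by linarith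
  have hTpT : 0 < Tpost - T := by linarith
  have hσ2 : 0 < σ ^ 2 := by positivity
  have hTne : T ≠ 0 := hT.ne'
  have htne : t ≠ 0 := ht.ne'
  have hdne : Tpost / 3 - T / 4 ≠ 0 := hd.ne'
  have hTpTne : Tpost - T ≠ 0 := hTpT.ne'
  have hσne : σ ^ 2 ≠ 0 := hσ2.ne'
  -- entries of the difference matrix, without the `(σ ^ 2)⁻¹` factor
  obtain ⟨a, ha⟩ : ∃ a : ℝ,
      a = 1 / T - 1 / T * ((Tpost / 4 - T / 6) / (Tpost / 3 - T / 4)) := ⟨_, rfl⟩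
  obtain ⟨b, hb⟩ : ∃ b : ℝ,
      b = 1 / T - 1 / T * ((Tpost / 2 - T / 2) / (Tpost / 3 - T / 4)) := ⟨_, rfl⟩
  obtain ⟨c, hc⟩ : ∃ c : ℝ,
      c = (1 / t + 1 / (Tpost - T)) - 1 / T * (Tpost / (Tpost / 3 - T / 4)) := ⟨_, rfl⟩
  have hE : (fisherThreePoint σ t T Tpost - fisherIJ σ T Tpost)
      = (σ ^ 2)⁻¹ • !![a, b; b, c] := by
    rw [ha, hb, hc]
    unfold fisherThreePoint fisherIJ
    ext i j
    fin_cases i <;> fin_cases j <;>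
      simp [Matrix.sub_apply, Matrix.smul_apply, smul_eq_mul] <;> ring
  have hM : dotProduct (star ![b, -a])
      ((fisherThreePoint σ t T Tpost - fisherIJ σ T Tpost) *ᵥ ![b, -a])
        = (σ ^ 2)⁻¹ * (a * (a * c - b * b)) := by
    rw [hE]
    simp [dotProduct, mulVec, Fin.sum_univ_two, Matrix.smul_apply, smul_eq_mul]
    ring
  have key := h.dotProduct_mulVec_nonneg ![b, -a]
  rw [hM] at key
  have key' : 0 ≤ a * (a * c - b * b) := by
    have := inv_pos.mpr hσ2
    nlinarith [key]
  -- but a > 0 and a * c - b * b < 0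
  have hr : (Tpost / 4 - T / 6) / (Tpost / 3 - T / 4) < 1 := (div_lt_one hd).2 (by linarith)
  have hiT : 0 < 1 / T := by positivity
  have hapos : 0 < a := by rw [ha]; nlinarith
  have hdet : a * c - b * b < 0 := by
    have h1 : a * c - b * b =
        (4 * Tpost - 3 * T) * (Tpost - T) * (T - 4 * t)
          / (144 * T ^ 2 * (Tpost / 3 - T / 4) ^ 2 * t) := by
      have h43 : 4 * Tpost - 3 * T ≠ 0 := by intro h0; nlinarith
      rw [ha, hb, hc,
        show Tpost / 3 - T / 4 = (4 * Tpost - 3 * T) / 12 from by ring]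
      have h43' : Tpost * 4 - T * 3 ≠ 0 := by intro h0; apply h43; linarith
      field_simp
      ring
    rw [h1]
    have hnum : (4 * Tpost - 3 * T) * (Tpost - T) * (T - 4 * t) < 0 := by
      have h2 : 0 < 4 * Tpost - 3 * T := by linarith
      have h3 : T - 4 * t < 0 := by linarith
      exact mul_neg_of_pos_of_neg (mul_pos h2 hTpT) h3
    have hden : 0 < 144 * T ^ 2 * (Tpost / 3 - T / 4) ^ 2 * t := by positivity
    exact div_neg_of_neg_of_pos hnum hden
  nlinarith [mul_pos hapos (neg_pos.mpr hdet)]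
end

section
/- Let τ₁ > 1 be a real number and τ₂ a real number. Then the determinant of the matrix B(τ₁, τ₂), namely det B = (1 − (τ₁/4 − 1/6)/(τ₁/3 − 1/4))·(τ₂ + 1/(τ₁−1) − τ₁/(τ₁/3 − 1/4)) − (1 − (τ₁/2 − 1/2)/(τ₁/3 − 1/4))², is nonnegative if and only if τ₂ ≥ 4. -/
/-- For `τ₁ > 1`, the determinant of the matrix `B(τ₁, τ₂)`,
`det B = (1 − (τ₁/4 − 1/6)/(τ₁/3 − 1/4))·(τ₂ + 1/(τ₁−1) − τ₁/(τ₁/3 − 1/4))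
        − (1 − (τ₁/2 − 1/2)/(τ₁/3 − 1/4))²`,
is nonnegative if and only if `τ₂ ≥ 4`. -/
theorem detB_nonneg_iff (τ₁ τ₂ : ℝ) (hτ₁ : 1 < τ₁) :
    0 ≤ (1 - (τ₁ / 4 - 1 / 6) / (τ₁ / 3 - 1 / 4)) *
          (τ₂ + 1 / (τ₁ - 1) - τ₁ / (τ₁ / 3 - 1 / 4)) -
        (1 - (τ₁ / 2 - 1 / 2) / (τ₁ / 3 - 1 / 4)) ^ 2 ↔ 4 ≤ τ₂ := by
  have hd : (0:ℝ) < τ₁ / 3 - 1 / 4 := by linarith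
  have h1 : (0:ℝ) < τ₁ - 1 := by linarith
  have h1' : τ₁ - 1 ≠ 0 := ne_of_gt h1
  have hd' : τ₁ / 3 - 1 / 4 ≠ 0 := ne_of_gt hd
  have key : (1 - (τ₁ / 4 - 1 / 6) / (τ₁ / 3 - 1 / 4)) *
          (τ₂ + 1 / (τ₁ - 1) - τ₁ / (τ₁ / 3 - 1 / 4)) -
        (1 - (τ₁ / 2 - 1 / 2) / (τ₁ / 3 - 1 / 4)) ^ 2
      = ((4*τ₁-3)*(τ₁-1)*(τ₂-4)) / (144*(τ₁/3-1/4)^2) := by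
    have h4 : (4*τ₁-3) ≠ 0 := by nlinarith
    rw [show τ₁/3-1/4 = (4*τ₁-3)/12 by ring]
    field_simp [h4, h1', show τ₁ * 4 - 3 ≠ 0 by contrapose! h4; linarith]
    ring
  rw [key]
  have hden : (0:ℝ) < 144*(τ₁/3-1/4)^2 := by positivity
  have hp : (0:ℝ) < (4*τ₁-3)*(τ₁-1) := by nlinarith
  rw [div_nonneg_iff]
  constructor
  · rintro (⟨hn, _⟩ | ⟨_, hdle⟩)
    · by_contra hc
      push_neg at hc
      nlinarith [mul_pos hp (show (0:ℝ) < 4 - τ₂ by linarith)]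
    · nlinarith
  · intro h
    left
    exact ⟨by nlinarith [mul_nonneg hp.le (show (0:ℝ) ≤ τ₂ - 4 by linarith)], hden.le⟩
end

section
/- Let 0 < t < T be real numbers and consider the square-root decay kernel G(s) = s^{−1/2}. Then (∫₀ᵗ s^{−1/2} ds)²/t + (∫_t^T s^{−1/2} ds)²/(T − t) ≥ (3/T³)·(∫₀ᵀ s^{−1/2}(T − s) ds)² if and only if t ≤ T/4. Equivalently: 4 + 4(√T − √t)/(√T + √t) ≥ 16/3 if and only if t ≤ T/4. (This is the γ = 1/2 case of the paper's comparison between the Fisher information of the two sampled prices (S_t, S_T) and that of the VWAP cost J for calibrating the instantaneous impact function in a propagator model; it shows the two-point scheme dominates VWAP exactly when the early sample lies in the first quarter of the trade duration.) -/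
open MeasureTheory intervalIntegral

lemma sqrt_key (t T : ℝ) (ht : 0 < t) (htT : t < T) :
    4 + 4 * (Real.sqrt T - Real.sqrt t) / (Real.sqrt T + Real.sqrt t) ≥ 16 / 3
      ↔ t ≤ T / 4 := by
  have ha : 0 < Real.sqrt t := Real.sqrt_pos.2 ht
  have hb : Real.sqrt t < Real.sqrt T := Real.sqrt_lt_sqrt ht.le htT
  have hat : Real.sqrt t ^ 2 = t := Real.sq_sqrt ht.le
  have hbt : Real.sqrt T ^ 2 = T := Real.sq_sqrt (ht.trans htT).le
  set a := Real.sqrt t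
  set b := Real.sqrt T
  have hab : 0 < b + a := by linarith
  have h1 : (4 + 4 * (b - a) / (b + a) ≥ 16 / 3) ↔ 2 * a ≤ b := by
    rw [ge_iff_le, show (16:ℝ)/3 = 4 + 4/3 by norm_num, add_le_add_iff_left,
      div_le_div_iff₀ (by norm_num) hab]
    constructor <;> intro h <;> linarith
  rw [h1]
  constructor
  · intro h; nlinarith
  · intro h
    by_contra hc
    push_neg at hc
    nlinarith

/-- For the square-root decay kernel `G(s) = s^{−1/2}` and `0 < t < T`, the two-point
Fisher information dominates the VWAP one exactly when `t ≤ T/4`; equivalently,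
`4 + 4(√T − √t)/(√T + √t) ≥ 16/3` iff `t ≤ T/4`. -/
theorem sqrt_kernel_twoPoint_vs_vwap (t T : ℝ) (ht : 0 < t) (htT : t < T) :
    ((∫ s in (0:ℝ)..t, s ^ (-(1 / 2) : ℝ)) ^ 2 / t
        + (∫ s in t..T, s ^ (-(1 / 2) : ℝ)) ^ 2 / (T - t)
      ≥ (3 / T ^ 3) * (∫ s in (0:ℝ)..T, s ^ (-(1 / 2) : ℝ) * (T - s)) ^ 2
      ↔ t ≤ T / 4) ∧
    (4 + 4 * (Real.sqrt T - Real.sqrt t) / (Real.sqrt T + Real.sqrt t) ≥ 16 / 3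
      ↔ t ≤ T / 4) := by
  have hT : 0 < T := ht.trans htT
  have ha : 0 < Real.sqrt t := Real.sqrt_pos.2 ht
  have hb : Real.sqrt t < Real.sqrt T := Real.sqrt_lt_sqrt ht.le htT
  have hat : Real.sqrt t ^ 2 = t := Real.sq_sqrt ht.le
  have hbt : Real.sqrt T ^ 2 = T := Real.sq_sqrt hT.le
  have hhalf : (-1 : ℝ) < -(1/2) := by norm_num
  -- integral 1
  have h1 : (∫ s in (0:ℝ)..t, s ^ (-(1 / 2) : ℝ)) = 2 * Real.sqrt t := by
    rw [integral_rpow (Or.inl hhalf)]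
    norm_num
    rw [Real.sqrt_eq_rpow]
    ring
  have h2 : (∫ s in t..T, s ^ (-(1 / 2) : ℝ)) = 2 * (Real.sqrt T - Real.sqrt t) := by
    rw [integral_rpow (Or.inl hhalf)]
    norm_num
    rw [Real.sqrt_eq_rpow, Real.sqrt_eq_rpow]
    ring
  have h3 : (∫ s in (0:ℝ)..T, s ^ (-(1 / 2) : ℝ) * (T - s))
      = 4 / 3 * (T * Real.sqrt T) := by
    have hcong : ∀ s ∈ Set.uIcc (0:ℝ) T,
        s ^ (-(1 / 2) : ℝ) * (T - s) = T * s ^ (-(1 / 2) : ℝ) - s ^ ((1 / 2) : ℝ) := by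
      intro s hs
      rw [Set.uIcc_of_le hT.le] at hs
      rcases eq_or_lt_of_le hs.1 with h0 | h0
      · simp [← h0, Real.zero_rpow (by norm_num : (-(1/2):ℝ) ≠ 0),
          Real.zero_rpow (by norm_num : ((1/2):ℝ) ≠ 0)]
      · have : s ^ (-(1 / 2) : ℝ) * s = s ^ ((1 / 2) : ℝ) := by
          nth_rewrite 2 [← Real.rpow_one s]
          rw [← Real.rpow_add h0]
          norm_num
        ring_nf
        nlinarith [this]
    rw [intervalIntegral.integral_congr hcong,
      intervalIntegral.integral_sub
        ((intervalIntegrable_rpow' hhalf).const_mul T)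
        (intervalIntegrable_rpow' (by norm_num)),
      intervalIntegral.integral_const_mul,
      integral_rpow (Or.inl hhalf), integral_rpow (Or.inl (by norm_num : (-1:ℝ) < 1/2))]
    norm_num
    rw [Real.sqrt_eq_rpow, show ((3:ℝ)/2) = 1 + 1/2 by norm_num, Real.rpow_add hT,
      Real.rpow_one]
    ring
  rw [h1, h2, h3]
  have hTt : T - t = (Real.sqrt T - Real.sqrt t) * (Real.sqrt T + Real.sqrt t) := by
    nlinarith
  have hne1 : Real.sqrt T - Real.sqrt t ≠ 0 := by linarith
  have hne2 : Real.sqrt T + Real.sqrt t ≠ 0 := by positivity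
  have heq1 : (2 * Real.sqrt t) ^ 2 / t + (2 * (Real.sqrt T - Real.sqrt t)) ^ 2 / (T - t)
      = 4 + 4 * (Real.sqrt T - Real.sqrt t) / (Real.sqrt T + Real.sqrt t) := by
    have hA : (2 * Real.sqrt t) ^ 2 / t = 4 := by
      rw [mul_pow, hat]; field_simp; norm_num
    have hB : (2 * (Real.sqrt T - Real.sqrt t)) ^ 2 / (T - t)
        = 4 * (Real.sqrt T - Real.sqrt t) / (Real.sqrt T + Real.sqrt t) := by
      rw [hTt]; field_simp; ring
    rw [hA, hB]
  have heq2 : (3 / T ^ 3) * (4 / 3 * (T * Real.sqrt T)) ^ 2 = 16 / 3 := by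
    have : (4 / 3 * (T * Real.sqrt T)) ^ 2 = 16 / 9 * T ^ 3 := by nlinarith
    rw [this]; field_simp; ring
  rw [heq1, heq2]
  exact ⟨sqrt_key t T ht htT, sqrt_key t T ht htT⟩
end

section
/- Fix real numbers ρ > 0 and 0 < τ < 1, and for T > 0 define F(T) = ((1 − e^{−ρτT})/ρ)²/τ + ((e^{−ρτT} − e^{−ρT})/ρ)²/(1 − τ) − (3/T²)·((ρT + e^{−ρT} − 1)/ρ²)². Then F(T) converges to 1/(τρ²) − 3/ρ² as T → ∞. In particular, the limit is nonnegative if and only if τ ≤ 1/3. (This is the paper's computation for the exponential decay kernel G(s) = e^{−ρs}: in the regime t, T → ∞ with t/T → τ, two-point sampling (S_t, S_T) has at least as much Fisher information as the VWAP cost exactly when τ ≤ 1/3, regardless of ρ.) -/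
open Filter Real

private lemma exp_neg_mul_tendsto (c : ℝ) (hc : 0 < c) :
    Tendsto (fun T : ℝ => Real.exp (-(c * T))) atTop (nhds 0) := by
  have h1 : Tendsto (fun T : ℝ => c * T) atTop atTop :=
    Tendsto.const_mul_atTop hc tendsto_id
  have h2 : Tendsto (fun T : ℝ => -(c * T)) atTop atBot := tendsto_neg_atBot_iff.mpr h1
  exact Real.tendsto_exp_atBot.comp h2

/-- For the exponential decay kernel `G(s) = e^{−ρs}` with `ρ > 0` and `0 < τ < 1`, the
difference `F(T)` of the two-point and VWAP-based Fisher information terms converges,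
as `T → ∞`, to `1/(τρ²) − 3/ρ²`, which is nonnegative iff `τ ≤ 1/3`. -/
theorem exp_kernel_limit (ρ τ : ℝ) (hρ : 0 < ρ) (hτ0 : 0 < τ) (hτ1 : τ < 1) :
    Filter.Tendsto
      (fun T : ℝ =>
        ((1 - Real.exp (-(ρ * τ * T))) / ρ) ^ 2 / τ
          + ((Real.exp (-(ρ * τ * T)) - Real.exp (-(ρ * T))) / ρ) ^ 2 / (1 - τ)
          - (3 / T ^ 2) * ((ρ * T + Real.exp (-(ρ * T)) - 1) / ρ ^ 2) ^ 2)
      Filter.atTop (nhds (1 / (τ * ρ ^ 2) - 3 / ρ ^ 2)) ∧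
    (0 ≤ 1 / (τ * ρ ^ 2) - 3 / ρ ^ 2 ↔ τ ≤ 1 / 3) := by
  constructor
  · have hE1 : Tendsto (fun T : ℝ => Real.exp (-(ρ * τ * T))) atTop (nhds 0) :=
      exp_neg_mul_tendsto (ρ * τ) (by positivity)
    have hE2 : Tendsto (fun T : ℝ => Real.exp (-(ρ * T))) atTop (nhds 0) :=
      exp_neg_mul_tendsto ρ hρ
    have hinv : Tendsto (fun T : ℝ => T⁻¹) atTop (nhds 0) := tendsto_inv_atTop_zero
    -- first term
    have t1 : Tendsto (fun T : ℝ => ((1 - Real.exp (-(ρ * τ * T))) / ρ) ^ 2 / τ) atTop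
        (nhds (1 / (τ * ρ ^ 2))) := by
      have : Tendsto (fun T : ℝ => ((1 - Real.exp (-(ρ * τ * T))) / ρ) ^ 2 / τ) atTop
          (nhds (((1 - 0) / ρ) ^ 2 / τ)) :=
        (((tendsto_const_nhds.sub hE1).div_const ρ).pow 2).div_const τ
      convert this using 2
      field_simp
      ring
    -- second term
    have t2 : Tendsto (fun T : ℝ =>
        ((Real.exp (-(ρ * τ * T)) - Real.exp (-(ρ * T))) / ρ) ^ 2 / (1 - τ)) atTop
        (nhds 0) := by
      have : Tendsto (fun T : ℝ =>
          ((Real.exp (-(ρ * τ * T)) - Real.exp (-(ρ * T))) / ρ) ^ 2 / (1 - τ)) atTop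
          (nhds (((0 - 0 : ℝ) / ρ) ^ 2 / (1 - τ))) :=
        (((hE1.sub hE2).div_const ρ).pow 2).div_const (1 - τ)
      simpa using this
    -- third term
    have t3 : Tendsto (fun T : ℝ =>
        (3 / T ^ 2) * ((ρ * T + Real.exp (-(ρ * T)) - 1) / ρ ^ 2) ^ 2) atTop
        (nhds (3 / ρ ^ 2)) := by
      have key : Tendsto (fun T : ℝ =>
          3 * ((ρ + (Real.exp (-(ρ * T)) - 1) * T⁻¹) / ρ ^ 2) ^ 2) atTop
          (nhds (3 * ((ρ + (0 - 1) * 0) / ρ ^ 2) ^ 2)) := by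
        exact (((((tendsto_const_nhds (x := (ρ : ℝ))).add
          (((hE2.sub tendsto_const_nhds)).mul hinv)).div_const (ρ ^ 2)).pow 2).const_mul 3)
      have keq : (3 : ℝ) * ((ρ + (0 - 1) * 0) / ρ ^ 2) ^ 2 = 3 / ρ ^ 2 := by
        field_simp; ring
      rw [keq] at key
      refine key.congr' ?_
      filter_upwards [eventually_gt_atTop (0 : ℝ)] with T hT
      have hT' : T ≠ 0 := ne_of_gt hT
      field_simp
      ring
    have := (t1.add t2).sub t3
    simpa using this
  · have hρ2 : (0 : ℝ) < ρ ^ 2 := by positivity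
    rw [sub_nonneg, div_le_div_iff₀ hρ2 (by positivity)]
    constructor <;> intro h <;> nlinarith
end

section
/- Let N ≥ 1 and let 0 = t₀ < t₁ < ... < t_N be real numbers. Suppose w₀, w₁, ..., w_N are real numbers such that ∑_{i=1}^{N} w_i·(t_i^{1−γ} − t_{i−1}^{1−γ}) = w₀·(1 − γ) for every real γ < 1. Then w_i = 0 for every i ∈ {0, 1, ..., N}. (This linear-independence statement is the key step in the paper's proof that the increments η_i(γ) = ∫_{t_{i−1}}^{t_i} s^{−γ} ds cannot all lie in a proper affine hyperplane, which establishes that the full price trajectory is the unique minimal sufficient statistic for propagator models with power-law decay kernels.) -/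
open Filter Finset

lemma exp_sum_eq_zero : ∀ (n : ℕ) (x c : ℕ → ℝ), (∀ i, i < n → 0 < x i) →
    (∀ i j, i < j → j < n → x i < x j) →
    (∀ m : ℕ, 1 ≤ m → ∑ i ∈ Finset.range n, c i * x i ^ m = 0) →
    ∀ i, i < n → c i = 0 := by
  intro n
  induction n with
  | zero => intro x c _ _ _ i hi; omega
  | succ n ih =>
    intro x c hx hlt h
    have hxn : 0 < x n := hx n (by omega)
    have hcn : c n = 0 := by
      have hlim : Tendsto (fun m : ℕ => ∑ i ∈ Finset.range n, c i * (x i / x n) ^ m)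
          atTop (nhds 0) := by
        have h0 : Tendsto (fun m : ℕ => ∑ i ∈ Finset.range n, c i * (x i / x n) ^ m)
            atTop (nhds (∑ _i ∈ Finset.range n, (0:ℝ))) := by
          refine tendsto_finset_sum _ (fun i hi => ?_)
          simp only [Finset.mem_range] at hi
          have hr0 : 0 ≤ x i / x n := le_of_lt (div_pos (hx i (by omega)) hxn)
          have hr1 : x i / x n < 1 := (div_lt_one hxn).2 (hlt i n hi (by omega))
          simpa using (tendsto_pow_atTop_nhds_zero_of_lt_one hr0 hr1).const_mul (c i)
        simpa using h0
      have heq : ∀ m : ℕ, 1 ≤ m →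
          (∑ i ∈ Finset.range n, c i * (x i / x n) ^ m) = - c n := by
        intro m hm
        have h0 := h m hm
        rw [Finset.sum_range_succ] at h0
        have hsum : ∑ i ∈ Finset.range n, c i * x i ^ m = - (c n * x n ^ m) := by
          linarith
        have hxnm : (x n : ℝ) ^ m ≠ 0 := pow_ne_zero _ (ne_of_gt hxn)
        calc ∑ i ∈ Finset.range n, c i * (x i / x n) ^ m
            = (∑ i ∈ Finset.range n, c i * x i ^ m) / x n ^ m := by
              rw [Finset.sum_div]
              refine Finset.sum_congr rfl fun i _ => ?_
              rw [div_pow]; ring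
          _ = - c n := by rw [hsum]; field_simp
      have hlim2 : Tendsto (fun m : ℕ => ∑ i ∈ Finset.range n, c i * (x i / x n) ^ m)
          atTop (nhds (- c n)) := by
        apply Tendsto.congr' _ tendsto_const_nhds
        filter_upwards [eventually_ge_atTop 1] with m hm
        exact (heq m hm).symm
      have := tendsto_nhds_unique hlim2 hlim
      linarith
    have h' : ∀ m : ℕ, 1 ≤ m → ∑ i ∈ Finset.range n, c i * x i ^ m = 0 := by
      intro m hm
      have h0 := h m hm
      rw [Finset.sum_range_succ, hcn] at h0
      simpa using h0
    intro i hi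
    rcases Nat.lt_succ_iff_lt_or_eq.mp hi with h'' | h''
    · exact ih x c (fun i hi => hx i (by omega)) (fun i j hij hj => hlt i j hij (by omega)) h' i h''
    · subst h''; exact hcn


/-- Linear independence of power increments: if `0 = t₀ < t₁ < ... < t_N` and
`∑_{i=1}^{N} wᵢ·(tᵢ^{1−γ} − t_{i−1}^{1−γ}) = w₀·(1 − γ)` for every real `γ < 1`,
then all the `wᵢ` vanish. -/
theorem power_increments_linearIndependent (N : ℕ) (hN : 1 ≤ N) (t : ℕ → ℝ)
    (ht0 : t 0 = 0) (hmono : ∀ i, i < N → t i < t (i + 1)) (w : ℕ → ℝ)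
    (h : ∀ γ : ℝ, γ < 1 →
      ∑ i ∈ Finset.range N, w (i + 1) * (t (i + 1) ^ (1 - γ) - t i ^ (1 - γ))
        = w 0 * (1 - γ)) :
    ∀ i, i ≤ N → w i = 0 := by
  obtain ⟨M, rfl⟩ : ∃ M, N = M + 1 := ⟨N - 1, by omega⟩
  -- positivity
  have hpos : ∀ i, i < M + 1 → 0 < t (i + 1) := by
    intro i hi
    induction i with
    | zero => rw [← ht0]; exact hmono 0 (by omega)
    | succ k ihk => exact lt_trans (ihk (by omega)) (hmono (k + 1) hi)
  have hltt : ∀ i j, i < j → j ≤ M + 1 → t i < t j := by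
    intro i j hij hjN
    induction j with
    | zero => omega
    | succ k ihk =>
      rcases Nat.lt_succ_iff_lt_or_eq.mp hij with h' | h'
      · exact lt_trans (ihk h' (by omega)) (hmono k (by omega))
      · subst h'; exact hmono i (by omega)
  -- natural-power identity
  have hP : ∀ m : ℕ, 1 ≤ m →
      ∑ i ∈ Finset.range (M + 1), w (i + 1) * (t (i + 1) ^ m - t i ^ m)
        = w 0 * m := by
    intro m hm
    have hγ : (1 : ℝ) - (m : ℝ) < 1 := by
      have : (0:ℝ) < m := by exact_mod_cast hm
      linarith
    have h0 := h (1 - (m : ℝ)) hγ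
    have he : (1 : ℝ) - (1 - (m : ℝ)) = (m : ℝ) := by ring
    rw [he] at h0
    simpa [Real.rpow_natCast] using h0
  set a : ℕ → ℝ := fun i => w (i + 1) - (if i + 1 < M + 1 then w (i + 2) else 0) with ha
  -- Abel summation
  have hS : ∀ m : ℕ, 1 ≤ m →
      ∑ i ∈ Finset.range (M + 1), a i * t (i + 1) ^ m = w 0 * m := by
    intro m hm
    rw [← hP m hm]
    have expand : ∀ i ∈ Finset.range (M + 1),
        a i * t (i + 1) ^ m
          = w (i + 1) * t (i + 1) ^ m
            - (if i + 1 < M + 1 then w (i + 2) else 0) * t (i + 1) ^ m := by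
      intro i _; rw [ha]; ring
    have expand2 : ∀ i ∈ Finset.range (M + 1),
        w (i + 1) * (t (i + 1) ^ m - t i ^ m)
          = w (i + 1) * t (i + 1) ^ m - w (i + 1) * t i ^ m := by
      intro i _; ring
    rw [Finset.sum_congr rfl expand, Finset.sum_congr rfl expand2,
        Finset.sum_sub_distrib, Finset.sum_sub_distrib]
    congr 1
    -- ∑ ite * t(i+1)^m = ∑ w(i+1) * t i ^ m
    rw [Finset.sum_range_succ, Finset.sum_range_succ']
    have hz : w (0 + 1) * t 0 ^ m = 0 := by
      rw [ht0, zero_pow (by omega)]; ring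
    rw [hz, if_neg (by omega)]
    simp only [zero_mul, add_zero]
    refine Finset.sum_congr rfl fun i hi => ?_
    simp only [Finset.mem_range] at hi
    rw [if_pos (by omega)]
  -- double-differencing kills the linear term
  have hc : ∀ i, i < M + 1 → a i * (t (i + 1) - 1) ^ 2 = 0 := by
    refine exp_sum_eq_zero (M + 1) (fun i => t (i + 1))
      (fun i => a i * (t (i + 1) - 1) ^ 2) (fun i hi => hpos i hi)
      (fun i j hij hj => hltt (i + 1) (j + 1) (by omega) (by omega)) ?_
    intro m hm
    have e : ∀ i ∈ Finset.range (M + 1),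
        a i * (t (i + 1) - 1) ^ 2 * t (i + 1) ^ m
          = a i * t (i + 1) ^ (m + 2) - 2 * (a i * t (i + 1) ^ (m + 1))
            + a i * t (i + 1) ^ m := by
      intro i _; ring
    rw [Finset.sum_congr rfl e, Finset.sum_add_distrib, Finset.sum_sub_distrib,
        ← Finset.mul_sum, hS (m + 2) (by omega), hS (m + 1) (by omega), hS m hm]
    push_cast
    ring
  -- each term a i * t(i+1)^m is constant in m
  have hterm : ∀ i, i < M + 1 → ∀ m : ℕ, a i * t (i + 1) ^ m = a i * t (i + 1) := by
    intro i hi m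
    rcases mul_eq_zero.mp (hc i hi) with h0 | h0
    · rw [h0]; ring
    · have : t (i + 1) = 1 := by
        have := pow_eq_zero_iff (n := 2) (by omega) |>.mp h0
        linarith [sub_eq_zero.mp this]
      rw [this]; simp
  -- w 0 = 0
  have hw0 : w 0 = 0 := by
    have h1 := hS 1 (by omega)
    have h2 := hS 2 (by omega)
    rw [Finset.sum_congr rfl (fun i hi => hterm i (Finset.mem_range.mp hi) 1)] at h1
    rw [Finset.sum_congr rfl (fun i hi => hterm i (Finset.mem_range.mp hi) 2)] at h2
    rw [h1] at h2
    push_cast at h2 ⊢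
    linarith
  -- all a i = 0
  have ha0 : ∀ i, i < M + 1 → a i = 0 := by
    intro i hi
    rcases mul_eq_zero.mp (hc i hi) with h0 | h0
    · exact h0
    · have hti : t (i + 1) = 1 := by
        have := pow_eq_zero_iff (n := 2) (by omega) |>.mp h0
        linarith [sub_eq_zero.mp this]
      have h1 := hS 1 (by omega)
      rw [hw0] at h1
      have hsingle : ∑ j ∈ Finset.range (M + 1), a j * t (j + 1) ^ 1
          = a i * t (i + 1) ^ 1 := by
        refine Finset.sum_eq_single_of_mem i (Finset.mem_range.mpr hi) ?_
        intro j hj hji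
        have hj' := Finset.mem_range.mp hj
        rcases mul_eq_zero.mp (hc j (Finset.mem_range.mp hj)) with h0' | h0'
        · rw [h0']; ring
        · exfalso
          have htj : t (j + 1) = 1 := by
            have := pow_eq_zero_iff (n := 2) (by omega) |>.mp h0'
            linarith [sub_eq_zero.mp this]
          rcases lt_trichotomy i j with hlt' | heq' | hlt'
          · have := hltt (i + 1) (j + 1) (by omega) (by omega)
            rw [hti, htj] at this; linarith
          · exact hji heq'.symm
          · have := hltt (j + 1) (i + 1) (by omega) (by omega)
            rw [hti, htj] at this; linarith
      rw [hsingle, hti] at h1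
      simpa using h1
  -- unwind
  have hstepM : w (M + 1) = 0 := by
    have := ha0 M (by omega)
    rw [ha] at this
    simpa [if_neg (lt_irrefl (M + 1))] using this
  have hstep : ∀ i, i < M → w (i + 1) = w (i + 2) := by
    intro i hi
    have h' := ha0 i (by omega)
    simp only [ha] at h'
    rw [if_pos (show i + 1 < M + 1 by omega)] at h'
    linarith
  have hdown : ∀ k, k ≤ M → w (M + 1 - k) = 0 := by
    intro k
    induction k with
    | zero => intro _; simpa using hstepM
    | succ k ihk =>
      intro hk
      have h1 : M + 1 - (k + 1) = (M - k - 1) + 1 := by omega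
      have h2 : M + 1 - k = (M - k - 1) + 2 := by omega
      rw [h1, hstep (M - k - 1) (by omega), ← h2]
      exact ihk (by omega)
  intro i hi
  rcases Nat.eq_zero_or_pos i with h0 | h0
  · rw [h0]; exact hw0
  · have : i = M + 1 - (M + 1 - i) := by omega
    rw [this]
    exact hdown (M + 1 - i) (by omega)
end

section
/- Let N ≥ 1, let 0 = t₀ < t₁ < ... < t_N be real numbers, and for γ < 1 define a_i(γ) = (t_i^{1−γ} − t_{i−1}^{1−γ})/(1 − γ) for i = 1, ..., N. Let Γ ⊆ (−∞, 1) be a set containing a nonempty open interval. Then there exist γ₀, γ₁, ..., γ_N ∈ Γ such that the N×N matrix with (i, j) entry a_i(γ_j) − a_i(γ₀) is invertible; equivalently, the convex hull of {(a₁(γ), ..., a_N(γ)) : γ ∈ Γ} ⊆ ℝ^N has dimension N. (This is the technical claim proved in the appendix for the paper's theorem that the full trajectory is the unique sufficient statistic for the propagator model with power-law kernel.) -/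
open Finset Matrix

lemma exists_points_isUnit_det (m : ℕ) (S : Set ℝ) (F : ℝ → Fin m → ℝ)
    (hind : ∀ c : Fin m → ℝ, (∀ x ∈ S, ∑ i, c i * F x i = 0) → c = 0) :
    ∃ x : Fin m → ℝ, (∀ j, x j ∈ S) ∧
      IsUnit (Matrix.det (Matrix.of fun i j : Fin m => F (x j) i)) := by
  classical
  -- span is everything
  have hspan : Submodule.span ℝ (F '' S) = ⊤ := by
    by_contra hne
    obtain ⟨f, hf0, hfmap⟩ := Submodule.exists_dual_map_eq_bot_of_lt_top
      (lt_top_iff_ne_top.2 hne) inferInstance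
    have hfv : ∀ x ∈ S, f (F x) = 0 := by
      intro x hx
      have : f (F x) ∈ (Submodule.span ℝ (F '' S)).map f :=
        Submodule.mem_map_of_mem (Submodule.subset_span ⟨x, hx, rfl⟩)
      rw [hfmap] at this
      simpa using this
    have hrep : ∀ v : Fin m → ℝ, f v = ∑ i, v i * f (fun j => if i = j then 1 else 0) := by
      intro v
      rw [LinearMap.pi_apply_eq_sum_univ f v]
      simp [smul_eq_mul]
    have hc := hind (fun i => f (fun j => if i = j then 1 else 0)) ?_
    · apply hf0
      apply LinearMap.ext
      intro v
      rw [hrep v]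
      simp [funext_iff.1 hc]
    · intro x hx
      have := hfv x hx
      rw [hrep (F x)] at this
      simpa [mul_comm] using this
  obtain ⟨s, hsub, hspan', hli⟩ := exists_linearIndependent ℝ (F '' S)
  rw [hspan] at hspan'
  have hsfin : s.Finite := hli.set_finite_of_isNoetherian
  haveI := hsfin.fintype
  have hb : Module.Basis s ℝ (Fin m → ℝ) := Module.Basis.mk hli (by rw [Subtype.range_coe, hspan'])
  have hcard : Fintype.card s = m := by
    have := Module.finrank_eq_card_basis hb
    simpa [Module.finrank_fintype_fun_eq_card] using this.symm
  obtain ⟨e⟩ : Nonempty (Fin m ≃ s) := ⟨(Fintype.equivFinOfCardEq hcard).symm⟩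
  have hmem : ∀ j : Fin m, ∃ x, x ∈ S ∧ F x = (e j : Fin m → ℝ) := by
    intro j
    obtain ⟨x, hx, hFx⟩ := hsub (e j).2
    exact ⟨x, hx, hFx⟩
  choose x hxS hFx using hmem
  refine ⟨x, hxS, ?_⟩
  rw [← Matrix.isUnit_iff_isUnit_det]
  rw [← Matrix.linearIndependent_cols_iff_isUnit]
  have : (fun j => (Matrix.of (fun i j : Fin m => F (x j) i))ᵀ j) = fun j => (e j : Fin m → ℝ) := by
    funext j
    rw [← hFx j]
    rfl
  rw [show (Matrix.of (fun i j : Fin m => F (x j) i)).col = _ from this]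
  exact hli.comp e e.injective

open Finset Matrix

private noncomputable def Gfun (N : ℕ) (c0 : ℝ) (e b : ℕ → ℝ) (n : ℕ) (γ : ℝ) : ℝ :=
  (if n = 0 then c0 - c0 * γ else if n = 1 then -c0 else 0)
    + ∑ k ∈ Finset.range N, e k * b k ^ n * Real.exp (b k * γ)

private lemma abel_step (N : ℕ) (hN : 1 ≤ N) (c E : ℕ → ℝ) (hE0 : E 0 = 0) :
    ∑ i ∈ Finset.range N, c i * (E (i+1) - E i)
      = ∑ k ∈ Finset.range N, (c k - if k+1 < N then c (k+1) else 0) * E (k+1) := by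
  obtain ⟨M, rfl⟩ : ∃ M, N = M + 1 := ⟨N-1, by omega⟩
  simp only [mul_sub, Finset.sum_sub_distrib, sub_mul]
  congr 1
  rw [Finset.sum_range_succ' (fun i => c i * E i) M, hE0, mul_zero, add_zero]
  rw [Finset.sum_range_succ (fun k => (if k+1 < M+1 then c (k+1) else 0) * E (k+1)) M]
  rw [if_neg (by omega), zero_mul, add_zero]
  refine Finset.sum_congr rfl fun i hi => ?_
  rw [if_pos (by simpa using Finset.mem_range.1 hi)]

private lemma propagator_coeffs_zero (N : ℕ) (hN : 1 ≤ N) (t : ℕ → ℝ) (ht0 : t 0 = 0)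
    (hmono : ∀ i, i < N → t i < t (i + 1)) (l u : ℝ) (hlu : l < u) (hu : u ≤ 1)
    (c0 : ℝ) (c : ℕ → ℝ)
    (hc : ∀ γ ∈ Set.Ioo l u, c0 + ∑ i ∈ Finset.range N,
      c i * ((t (i+1)) ^ (1-γ) - (t i) ^ (1-γ)) / (1-γ) = 0) :
    c0 = 0 ∧ ∀ i, i < N → c i = 0 := by
  classical
  -- positivity and strict monotonicity of t
  have htlt : ∀ k, k ≤ N → ∀ j, j < k → t j < t k := by
    intro k
    induction k with
    | zero => omega
    | succ k ih =>
      intro hk j hj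
      have h1 : t k < t (k+1) := hmono k (by omega)
      rcases Nat.lt_or_ge j k with h | h
      · exact lt_trans (ih (by omega) j h) h1
      · have : j = k := by omega
        rw [this]; exact h1
  have htpos : ∀ k, k < N → 0 < t (k+1) := by
    intro k hk
    have := htlt (k+1) (by omega) 0 (by omega)
    rwa [ht0] at this
  set b : ℕ → ℝ := fun k => -Real.log (t (k+1)) with hbdef
  set e : ℕ → ℝ := fun k => (c k - if k+1 < N then c (k+1) else 0) * t (k+1) with hedef
  have hexp : ∀ k, k < N → ∀ γ : ℝ, (t (k+1)) ^ (1-γ) = t (k+1) * Real.exp (b k * γ) := by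
    intro k hk γ
    have hp := htpos k hk
    rw [Real.rpow_def_of_pos hp]
    have h1 : Real.log (t (k+1)) * (1-γ) = Real.log (t (k+1)) + b k * γ := by
      simp only [hbdef]; ring
    rw [h1, Real.exp_add, Real.exp_log hp]
  -- the basic identity
  have hg : ∀ γ ∈ Set.Ioo l u, Gfun N c0 e b 0 γ = 0 := by
    intro γ hγ
    have hγ1 : (0:ℝ) < 1 - γ := by have := hγ.2; linarith
    have h1 : (1:ℝ) - γ ≠ 0 := ne_of_gt hγ1
    have e1 := hc γ hγ
    have e2 : c0 * (1-γ) + ∑ i ∈ Finset.range N,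
        c i * ((t (i+1)) ^ (1-γ) - (t i) ^ (1-γ)) = 0 := by
      have e2' : (c0 + ∑ i ∈ Finset.range N,
          c i * ((t (i+1)) ^ (1-γ) - (t i) ^ (1-γ)) / (1-γ)) * (1-γ) = 0 := by
        rw [e1]; ring
      rw [add_mul, Finset.sum_mul] at e2'
      rw [Finset.sum_congr rfl (fun i _ => div_mul_cancel₀
        (c i * ((t (i+1)) ^ (1-γ) - (t i) ^ (1-γ))) h1)] at e2'
      exact e2'
    have habel : ∑ i ∈ Finset.range N, c i * ((t (i+1)) ^ (1-γ) - (t i) ^ (1-γ))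
        = ∑ k ∈ Finset.range N, (c k - if k+1 < N then c (k+1) else 0) * ((t (k+1)) ^ (1-γ)) :=
      abel_step N hN c (fun j => (t j) ^ (1-γ)) (by simp [ht0, Real.zero_rpow h1])
    have h3 : ∑ k ∈ Finset.range N, (c k - if k+1 < N then c (k+1) else 0) * ((t (k+1)) ^ (1-γ))
        = ∑ k ∈ Finset.range N, e k * Real.exp (b k * γ) := by
      refine Finset.sum_congr rfl fun k hk => ?_
      rw [hexp k (Finset.mem_range.1 hk) γ]
      simp only [hedef]; ring
    rw [habel, h3] at e2
    norm_num [Gfun]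
    linear_combination e2
  -- the derivative tower
  have hder : ∀ n γ₀, HasDerivAt (Gfun N c0 e b n) (Gfun N c0 e b (n+1) γ₀) γ₀ := by
    intro n γ₀
    have hsum : HasDerivAt (fun γ => ∑ k ∈ Finset.range N, e k * b k ^ n * Real.exp (b k * γ))
        (∑ k ∈ Finset.range N, e k * b k ^ (n+1) * Real.exp (b k * γ₀)) γ₀ := by
      refine HasDerivAt.fun_sum fun k _ => ?_
      have h1 : HasDerivAt (fun γ : ℝ => b k * γ) (b k) γ₀ := by
        simpa using (hasDerivAt_id γ₀).const_mul (b k)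
      have h2 := (h1.exp).const_mul (e k * b k ^ n)
      rw [show e k * b k ^ (n+1) * Real.exp (b k * γ₀) = e k * b k ^ n * (Real.exp (b k * γ₀) * b k) by ring]
      exact h2
    have hP : HasDerivAt (fun γ => (if n = 0 then c0 - c0 * γ else if n = 1 then -c0 else 0))
        (if n+1 = 0 then c0 - c0 * γ₀ else if n+1 = 1 then -c0 else 0) γ₀ := by
      rcases n with _ | _ | n
      · norm_num
        have := (hasDerivAt_const γ₀ c0).fun_sub ((hasDerivAt_id γ₀).const_mul c0)
        simpa using this
      · norm_num
        exact hasDerivAt_const _ _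
      · norm_num
        exact hasDerivAt_const _ _
    exact hP.add hsum
  set γs : ℝ := (l+u)/2 with hγsdef
  have hγs : γs ∈ Set.Ioo l u := ⟨by simp only [hγsdef]; linarith, by simp only [hγsdef]; linarith⟩
  have hev : ∀ n, Gfun N c0 e b n =ᶠ[nhds γs] fun _ => (0:ℝ) := by
    intro n
    induction n with
    | zero => exact Filter.eventuallyEq_of_mem (isOpen_Ioo.mem_nhds hγs) hg
    | succ n ih =>
      have h1 := ih.deriv
      have h2 : deriv (Gfun N c0 e b n) = Gfun N c0 e b (n+1) := funext fun x => (hder n x).deriv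
      rw [h2] at h1
      simpa using h1
  have hGz : ∀ n, Gfun N c0 e b n γs = 0 := fun n => (hev n).eq_of_nhds
  -- injectivity of b
  have hbinj : ∀ j k, j < N → k < N → b j = b k → j = k := by
    intro j k hj hk hbe
    have hble : Real.log (t (j+1)) = Real.log (t (k+1)) := by
      have : -Real.log (t (j+1)) = -Real.log (t (k+1)) := hbe
      linarith [this]
    have hte : t (j+1) = t (k+1) := by
      have h1 := Real.exp_log (htpos j hj)
      have h2 := Real.exp_log (htpos k hk)
      rw [← h1, ← h2, hble]
    rcases lt_trichotomy j k with h | h | h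
    · exact absurd (htlt (k+1) (by omega) (j+1) (by omega)) (by rw [hte]; exact lt_irrefl _)
    · exact h
    · exact absurd (htlt (j+1) (by omega) (k+1) (by omega)) (by rw [hte]; exact lt_irrefl _)
  -- Vandermonde step
  have hw0 : ∀ k : Fin N, e k.val * b k.val ^ 2 * Real.exp (b k.val * γs) = 0 := by
    set v : Fin N → ℝ := fun k => b k.val with hvdef
    set w : Fin N → ℝ := fun k => e k.val * b k.val ^ 2 * Real.exp (b k.val * γs) with hwdef
    have hvinj : Function.Injective v := by
      intro j k hjk
      exact Fin.ext (hbinj j.val k.val j.isLt k.isLt hjk)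
    have hsum0 : ∀ m : Fin N, ∑ k : Fin N, v k ^ (m:ℕ) * w k = 0 := by
      intro m
      have hz := hGz ((m:ℕ)+2)
      simp only [Gfun, if_neg (by omega : ¬((m:ℕ)+2 = 0)), if_neg (by omega : ¬((m:ℕ)+2 = 1)),
        zero_add] at hz
      rw [← Fin.sum_univ_eq_sum_range
        (fun k => e k * b k ^ ((m:ℕ)+2) * Real.exp (b k * γs)) N] at hz
      rw [← hz]
      refine Finset.sum_congr rfl fun k _ => ?_
      simp only [hvdef, hwdef]
      ring
    have hdet : IsUnit ((Matrix.vandermonde v)ᵀ) := by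
      rw [Matrix.isUnit_iff_isUnit_det, Matrix.det_transpose, isUnit_iff_ne_zero]
      exact (Matrix.det_vandermonde_ne_zero_iff).2 hvinj
    have hinj := Matrix.mulVec_injective_iff_isUnit.2 hdet
    have hmw : (Matrix.vandermonde v)ᵀ.mulVec w = (Matrix.vandermonde v)ᵀ.mulVec 0 := by
      funext m
      rw [Matrix.mulVec_zero]
      simpa [Matrix.mulVec, dotProduct, Matrix.vandermonde] using hsum0 m
    have := hinj hmw
    intro k
    have hk := congrFun this k
    simpa [hwdef] using hk
  have he2 : ∀ k, k < N → e k * b k ^ 2 = 0 := by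
    intro k hk
    have h := hw0 ⟨k, hk⟩
    rcases mul_eq_zero.1 h with h' | h'
    · exact h'
    · exact absurd h' (Real.exp_ne_zero _)
  have heb : ∀ k, k < N → e k * b k = 0 := by
    intro k hk
    rcases mul_eq_zero.1 (he2 k hk) with h' | h'
    · rw [h', zero_mul]
    · rw [pow_eq_zero_iff (two_ne_zero)] at h'
      rw [h', mul_zero]
  have hc0 : c0 = 0 := by
    have h1 := hGz 1
    norm_num [Gfun] at h1
    rw [Finset.sum_eq_zero (fun k hk => by
      rw [show e k * b k * Real.exp (b k * γs) = (e k * b k) * Real.exp (b k * γs) from rfl,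
        heb k (Finset.mem_range.1 hk), zero_mul])] at h1
    linarith
  have hez : ∀ k, k < N → e k = 0 := by
    intro k hk
    rcases mul_eq_zero.1 (he2 k hk) with h' | h'
    · exact h'
    · have hbk : b k = 0 := by rwa [pow_eq_zero_iff (two_ne_zero)] at h'
      have h0 := hGz 0
      norm_num [Gfun, hc0] at h0
      have hsingle : ∑ j ∈ Finset.range N, e j * Real.exp (b j * γs)
          = e k * Real.exp (b k * γs) := by
        refine Finset.sum_eq_single_of_mem k (Finset.mem_range.2 hk) ?_
        intro j hj hjk
        rcases mul_eq_zero.1 (he2 j (Finset.mem_range.1 hj)) with h'' | h''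
        · rw [h'', zero_mul]
        · rw [pow_eq_zero_iff (two_ne_zero)] at h''
          exact absurd (hbinj j k (Finset.mem_range.1 hj) hk (by rw [h'', hbk]))
            hjk
      rw [hsingle] at h0
      rcases mul_eq_zero.1 h0 with h''' | h'''
      · exact h'''
      · exact absurd h''' (Real.exp_ne_zero _)
  have hd : ∀ k, k < N → c k - (if k+1 < N then c (k+1) else 0) = 0 := by
    intro k hk
    have h := hez k hk
    simp only [hedef] at h
    rcases mul_eq_zero.1 h with h' | h'
    · exact h'
    · exact absurd h' (ne_of_gt (htpos k hk))
  have hcz : ∀ m i, i < N → N ≤ i + m + 1 → c i = 0 := by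
    intro m
    induction m with
    | zero =>
      intro i hi hle
      have h := hd i hi
      rw [if_neg (by omega)] at h
      linarith
    | succ m ih =>
      intro i hi hle
      by_cases h : N ≤ i + m + 1
      · exact ih i hi h
      · have hi1 : i + 1 < N := by omega
        have h1 := hd i hi
        rw [if_pos hi1] at h1
        have h2 := ih (i+1) hi1 (by omega)
        linarith
  exact ⟨hc0, fun i hi => hcz N i hi (by omega)⟩

/-- Full-dimensionality of the natural-parameter curve of the discretized propagator
model with power-law kernel: there exist `γ₀, γ₁, ..., γ_N ∈ Γ` making the `N×N`
matrix with `(i,j)` entry `a_i(γ_j) − a_i(γ₀)` invertible, where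
`a_i(γ) = (t_i^{1−γ} − t_{i−1}^{1−γ})/(1 − γ)`. -/
theorem propagator_full_dimensional (N : ℕ) (hN : 1 ≤ N) (t : ℕ → ℝ)
    (ht0 : t 0 = 0) (hmono : ∀ i, i < N → t i < t (i + 1))
    (Γ : Set ℝ) (hΓsub : Γ ⊆ Set.Iio 1)
    (hΓopen : ∃ l u : ℝ, l < u ∧ Set.Ioo l u ⊆ Γ) :
    ∃ γ : Fin (N + 1) → ℝ, (∀ j, γ j ∈ Γ) ∧
      IsUnit (Matrix.det (Matrix.of fun i j : Fin N =>
        (t (i.val + 1) ^ (1 - γ j.succ) - t i.val ^ (1 - γ j.succ)) / (1 - γ j.succ)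
          - (t (i.val + 1) ^ (1 - γ 0) - t i.val ^ (1 - γ 0)) / (1 - γ 0))) := by
  classical
  obtain ⟨l, u, hlu, hIooΓ⟩ := hΓopen
  have hu1 : u ≤ 1 := by
    by_contra h
    push_neg at h
    have hmu : max l 1 < u := max_lt hlu h
    have hx : (max l 1 + u) / 2 ∈ Set.Ioo l u :=
      ⟨by nlinarith [le_max_left l 1], by nlinarith⟩
    have := hΓsub (hIooΓ hx)
    simp only [Set.mem_Iio] at this
    nlinarith [le_max_right l 1]
  set F : ℝ → Fin (N+1) → ℝ := fun γ => Fin.cons 1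
    (fun i : Fin N => (t (i.val + 1) ^ (1 - γ) - t i.val ^ (1 - γ)) / (1 - γ)) with hFdef
  have hind : ∀ cv : Fin (N+1) → ℝ,
      (∀ γ ∈ Set.Ioo l u, ∑ k, cv k * F γ k = 0) → cv = 0 := by
    intro cv hcv
    have key := propagator_coeffs_zero N hN t ht0 hmono l u hlu hu1 (cv 0)
      (fun i => if h : i < N then cv (Fin.succ ⟨i, h⟩) else 0) ?_
    · ext k
      refine Fin.cases ?_ ?_ k
      · exact key.1
      · intro i
        have h := key.2 i.val i.isLt
        rwa [dif_pos i.isLt, Fin.eta] at h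
    · intro γ hγ
      have h := hcv γ hγ
      rw [Fin.sum_univ_succ] at h
      simp only [hFdef, Fin.cons_zero, Fin.cons_succ, mul_one] at h
      have hS : ∑ i ∈ Finset.range N, (if h' : i < N then cv (Fin.succ ⟨i, h'⟩) else 0) *
            ((t (i+1)) ^ (1-γ) - (t i) ^ (1-γ)) / (1-γ)
          = ∑ i : Fin N, cv i.succ * (((t ((i:ℕ)+1)) ^ (1-γ) - (t (i:ℕ)) ^ (1-γ)) / (1-γ)) := by
        rw [← Fin.sum_univ_eq_sum_range (fun i => (if h' : i < N then cv (Fin.succ ⟨i, h'⟩) else 0) *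
            ((t (i+1)) ^ (1-γ) - (t i) ^ (1-γ)) / (1-γ)) N]
        refine Finset.sum_congr rfl fun i _ => ?_
        rw [dif_pos i.isLt, Fin.eta, mul_div_assoc]
      rw [hS]
      exact h
  obtain ⟨x, hxS, hdet⟩ := exists_points_isUnit_det (N+1) (Set.Ioo l u) F hind
  refine ⟨x, fun j => hIooΓ (hxS j), ?_⟩
  · 
    -- determinant manipulation
    set B : Matrix (Fin (N+1)) (Fin (N+1)) ℝ := Matrix.of (fun i j => F (x j) i) with hBdef
    set M : Matrix (Fin (N+1)) (Fin (N+1)) ℝ :=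
      Matrix.of (fun m j : Fin (N+1) => if m = 0 ∧ j ≠ 0 then (1:ℝ) else 0) with hMdef
    set E : Matrix (Fin (N+1)) (Fin (N+1)) ℝ := 1 - M with hEdef
    have hdetE : E.det = 1 := by
      have htri : E.BlockTriangular id := by
        intro i j hij
        simp only [hEdef, hMdef, Matrix.sub_apply, Matrix.one_apply, Matrix.of_apply]
        rw [if_neg (by exact fun h => absurd h (ne_of_gt hij)),
          if_neg (by rintro ⟨h1, -⟩; exact absurd (h1 ▸ hij) (by simp [Fin.pos_iff_ne_zero'])), sub_zero]
      rw [Matrix.det_of_upperTriangular htri]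
      refine Finset.prod_eq_one fun i _ => ?_
      simp [hEdef, hMdef]
    have hC : ∀ k j : Fin (N+1), (B * E) k j = if j = 0 then B k 0 else B k j - B k 0 := by
      intro k j
      simp only [hEdef, Matrix.mul_sub, Matrix.mul_one, Matrix.sub_apply]
      have hBM : (B * M) k j = if j = 0 then 0 else B k 0 := by
        simp only [Matrix.mul_apply, hMdef, Matrix.of_apply]
        by_cases hj : j = 0
        · simp [hj]
        · simp only [hj, ne_eq, not_false_iff, and_true]
          rw [Finset.sum_eq_single 0 (fun m _ hm => by rw [if_neg hm, mul_zero])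
            (fun h => absurd (Finset.mem_univ _) h)]
          simp
      rw [hBM]
      by_cases hj : j = 0 <;> simp [hj]
    have hdetBE : (B * E).det = B.det := by
      rw [Matrix.det_mul, hdetE, mul_one]
    have hB0 : ∀ j, B 0 j = 1 := by
      intro j
      simp [hBdef, hFdef]
    have hrow : ∀ j : Fin (N+1), j ≠ 0 → (B * E) 0 j = 0 := by
      intro j hj
      rw [hC 0 j, if_neg hj, hB0, hB0, sub_self]
    have hexp : (B * E).det = Matrix.det (Matrix.of fun i j : Fin N =>
        (t (i.val + 1) ^ (1 - x j.succ) - t i.val ^ (1 - x j.succ)) / (1 - x j.succ)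
          - (t (i.val + 1) ^ (1 - x 0) - t i.val ^ (1 - x 0)) / (1 - x 0)) := by
      rw [Matrix.det_succ_row_zero]
      rw [Finset.sum_eq_single 0 (fun j _ hj => by rw [hrow j hj, mul_zero, zero_mul])
        (fun h => absurd (Finset.mem_univ _) h)]
      rw [hC 0 0, if_pos rfl, hB0]
      simp only [Fin.val_zero, pow_zero, one_mul, mul_one]
      congr 1
      funext i j
      simp only [Matrix.submatrix_apply, Fin.zero_succAbove]
      rw [hC, if_neg (Fin.succ_ne_zero j)]
      simp [hBdef, hFdef, Fin.cons_succ]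
    rw [← hexp, hdetBE]
    exact hdet
end
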